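/- Let λ ≥ 0, let v ∈ ℝ^d be a unit vector, set Σ = I_d + λ v vᵀ, and let x ~ N(0, Σ). Let f : ℝ → ℝ be differentiable with |f'| ≤ M₁ on ℝ. Then for all unit vectors w, v⋆ ∈ ℝ^d: | E[ (f(⟨w,x⟩) − f(⟨v⋆,x⟩))·f'(⟨w,x⟩)·⟨w,x⟩ ] | ≤ M₁²·(1+λ)·‖w − v⋆‖. -/

import Mathlib

open MeasureTheory ProbabilityTheory Matrix

section auxlemmas
open Real
open scoped NNReal ENNReal

lemma aux_sq_exp {b : ℝ} (hb : 0 < b) :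
    ∫ x : ℝ, x ^ 2 * rexp (-b * x ^ 2) = b ^ (-(3:ℝ)/2) * (Real.sqrt π / 2) := by
  have h1 : (∫ x : ℝ, x ^ 2 * rexp (-b * x ^ 2))
      = 2 * ∫ x in Set.Ioi (0:ℝ), x ^ 2 * rexp (-b * x ^ 2) := by
    rw [← integral_comp_abs (f := fun x => x ^ 2 * rexp (-b * x ^ 2))]
    congr 1; funext x; rw [sq_abs]
  have h2 : (∫ x in Set.Ioi (0:ℝ), x ^ 2 * rexp (-b * x ^ 2))
      = ∫ x in Set.Ioi (0:ℝ), x ^ (2:ℝ) * rexp (-b * x ^ (2:ℝ)) := by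
    refine setIntegral_congr_fun measurableSet_Ioi (fun x hx => ?_)
    rw [← Real.rpow_natCast x 2]; norm_num
  have h3 := integral_rpow_mul_exp_neg_mul_rpow (p := 2) (q := 2) (b := b)
    (by norm_num) (by norm_num) hb
  have hG : Real.Gamma ((2 + 1) / 2) = Real.sqrt π / 2 := by
    have : ((2:ℝ) + 1) / 2 = 1/2 + 1 := by norm_num
    rw [this, Real.Gamma_add_one (by norm_num), Real.Gamma_one_half_eq]
    ring
  rw [h1, h2, h3, hG]
  ring_nf

lemma aux_alg {v : ℝ} (hv : 0 < v) :
    (Real.sqrt (2 * π * v))⁻¹ * (((2 * v)⁻¹) ^ (-(3:ℝ)/2) * (Real.sqrt π / 2)) = v := by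
  set c : ℝ := 2 * v with hc
  have hcpos : 0 < c := by positivity
  have h1 : 2 * π * v = π * c := by rw [hc]; ring
  have h2 : ((c:ℝ)⁻¹) ^ (-(3:ℝ)/2) = c ^ ((3:ℝ)/2) := by
    rw [Real.inv_rpow hcpos.le, ← Real.rpow_neg hcpos.le]
    norm_num
  have h3 : c ^ ((3:ℝ)/2) = c * c ^ ((1:ℝ)/2) := by
    rw [show ((3:ℝ)/2) = 1 + (1:ℝ)/2 by norm_num, Real.rpow_add hcpos, Real.rpow_one]
  rw [h1, Real.sqrt_mul pi_pos.le, h2, h3]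
  simp only [Real.sqrt_eq_rpow]
  have hπ : Real.sqrt π ≠ 0 := by positivity
  have hcr : c ^ ((1:ℝ)/2) ≠ 0 := by positivity
  field_simp
  rw [hc]

lemma gaussian_sq (v : ℝ≥0) :
    Integrable (fun x : ℝ => x ^ 2) (gaussianReal 0 v) ∧
      ∫ x, x ^ 2 ∂(gaussianReal 0 v) = v := by
  by_cases hv : v = 0
  · subst hv
    simp only [gaussianReal_zero_var, NNReal.coe_zero]
    have hae : (fun x : ℝ => x ^ 2) =ᵐ[Measure.dirac 0] fun _ => (0:ℝ) := by
      rw [MeasureTheory.ae_dirac_eq]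
      exact Filter.eventually_pure.mpr (by norm_num)
    exact ⟨(integrable_const (0:ℝ)).congr hae.symm, by rw [integral_congr_ae hae]; simp⟩
  have hvpos : (0:ℝ) < v := lt_of_le_of_ne v.coe_nonneg (by exact_mod_cast (Ne.symm hv))
  set b : ℝ := (2 * (v:ℝ))⁻¹ with hbdef
  have hb : 0 < b := by positivity
  have hpdf : ∀ x : ℝ, gaussianPDFReal 0 v x
      = (Real.sqrt (2 * π * v))⁻¹ * rexp (-b * x ^ 2) := by
    intro x
    rw [gaussianPDFReal, sub_zero]
    congr 2
    rw [hbdef]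
    field_simp
  have hint2 : Integrable (fun x : ℝ => x ^ 2 * rexp (-b * x ^ 2)) volume := by
    have h := integrable_rpow_mul_exp_neg_mul_sq hb (s := 2) (by norm_num)
    convert h using 2 with x
    rw [← Real.rpow_natCast x 2]; norm_num
  have hintpdf : Integrable (fun x : ℝ => gaussianPDFReal 0 v x * x ^ 2) volume := by
    have : (fun x : ℝ => gaussianPDFReal 0 v x * x ^ 2)
        = fun x : ℝ => (Real.sqrt (2 * π * v))⁻¹ * (x ^ 2 * rexp (-b * x ^ 2)) := by
      funext x; rw [hpdf]; ring
    rw [this]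
    exact hint2.const_mul _
  have hmeaspdf : Measurable fun x : ℝ => (gaussianPDFReal 0 v x).toNNReal :=
    (measurable_gaussianPDFReal 0 v).real_toNNReal
  have hwd : gaussianReal 0 v
      = volume.withDensity fun x => ((gaussianPDFReal 0 v x).toNNReal : ℝ≥0∞) := by
    rw [gaussianReal_of_var_ne_zero _ hv]
    rfl
  have hsmul : ∀ x : ℝ, (gaussianPDFReal 0 v x).toNNReal • (x ^ 2)
      = gaussianPDFReal 0 v x * x ^ 2 := by
    intro x
    rw [NNReal.smul_def, smul_eq_mul, Real.coe_toNNReal _ (gaussianPDFReal_nonneg _ _ _)]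
  constructor
  · rw [hwd, integrable_withDensity_iff_integrable_smul hmeaspdf]
    refine hintpdf.congr (Filter.Eventually.of_forall fun x => ?_)
    simp only [hsmul]
  · rw [hwd, integral_withDensity_eq_integral_smul hmeaspdf]
    calc ∫ x : ℝ, ((gaussianPDFReal 0 v x).toNNReal : ℝ≥0) • (x ^ 2)
        = ∫ x : ℝ, (Real.sqrt (2 * π * v))⁻¹ * (x ^ 2 * rexp (-b * x ^ 2)) := by
          refine integral_congr_ae (Filter.Eventually.of_forall fun x => ?_)
          simp only [hsmul]; rw [hpdf]; ring
      _ = (Real.sqrt (2 * π * v))⁻¹ * ∫ x : ℝ, x ^ 2 * rexp (-b * x ^ 2) :=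
          integral_const_mul _ _
      _ = v := by rw [aux_sq_exp hb, hbdef]; exact aux_alg hvpos


end auxlemmas

/-- `X` is a centered Gaussian random vector with covariance matrix `S`:
by the Cramér–Wold device, this holds iff every linear functional `⟨u, X⟩` has the
one-dimensional centered Gaussian law with variance `uᵀ S u`. -/
def IsCenteredGaussianVec {Ω : Type*} [MeasurableSpace Ω] (P : Measure Ω) {d : ℕ}
    (S : Matrix (Fin d) (Fin d) ℝ) (X : Ω → Fin d → ℝ) : Prop :=
  Measurable X ∧
    ∀ u : Fin d → ℝ, Measure.map (fun ω => u ⬝ᵥ X ω) P =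
      gaussianReal 0 (Real.toNNReal (u ⬝ᵥ S.mulVec u))

/-- Radial drift bound: for spiked Gaussian data `x ~ N(0, I + λvvᵀ)` and unit `w, v⋆`,
`|E[(f(⟨w,x⟩) − f(⟨v⋆,x⟩)) f'(⟨w,x⟩) ⟨w,x⟩]| ≤ M₁² (1+λ) ‖w − v⋆‖`. -/
theorem stmt15 {Ω : Type*} [MeasurableSpace Ω] (P : Measure Ω) [IsProbabilityMeasure P]
    {d : ℕ} (lam : ℝ) (hlam : 0 ≤ lam)
    (v : Fin d → ℝ) (hv : v ⬝ᵥ v = 1)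
    (S : Matrix (Fin d) (Fin d) ℝ) (hS : S = 1 + lam • vecMulVec v v)
    (X : Ω → Fin d → ℝ) (hX : IsCenteredGaussianVec P S X)
    (f : ℝ → ℝ) (hf : Differentiable ℝ f) (M₁ : ℝ) (hM₁ : ∀ x, |deriv f x| ≤ M₁)
    (w vstar : Fin d → ℝ) (hw : w ⬝ᵥ w = 1) (hvs : vstar ⬝ᵥ vstar = 1) :
    |∫ ω, (f (w ⬝ᵥ X ω) - f (vstar ⬝ᵥ X ω)) * deriv f (w ⬝ᵥ X ω) * (w ⬝ᵥ X ω) ∂P| ≤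
      M₁ ^ 2 * (1 + lam) * Real.sqrt ((w - vstar) ⬝ᵥ (w - vstar)) := by
  obtain ⟨hXm, hlaw⟩ := hX
  have hM₁0 : 0 ≤ M₁ := le_trans (abs_nonneg _) (hM₁ 0)
  -- algebraic facts about S and dot products
  have hvv : ∀ z : Fin d → ℝ, (vecMulVec v v).mulVec z = (v ⬝ᵥ z) • v := by
    intro z; funext i
    simp only [Matrix.mulVec, vecMulVec_apply, dotProduct, Pi.smul_apply, smul_eq_mul,
      Finset.sum_mul]
    exact Finset.sum_congr rfl fun j _ => by ring
  have hdotS : ∀ u : Fin d → ℝ, u ⬝ᵥ S.mulVec u = u ⬝ᵥ u + lam * (v ⬝ᵥ u) ^ 2 := by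
    intro u
    rw [hS, Matrix.add_mulVec, Matrix.one_mulVec, dotProduct_add, Matrix.smul_mulVec,
      hvv, dotProduct_smul, dotProduct_smul, smul_eq_mul, smul_eq_mul, dotProduct_comm u v]
    ring
  have hdot_nonneg : ∀ u : Fin d → ℝ, 0 ≤ u ⬝ᵥ u :=
    fun u => Finset.sum_nonneg fun i _ => mul_self_nonneg _
  have hCSfin : ∀ a z : Fin d → ℝ, (a ⬝ᵥ z) ^ 2 ≤ (a ⬝ᵥ a) * (z ⬝ᵥ z) := by
    intro a z
    have h := Finset.sum_mul_sq_le_sq_mul_sq Finset.univ a z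
    simpa [dotProduct, sq] using h
  have hS_nonneg : ∀ u : Fin d → ℝ, 0 ≤ u ⬝ᵥ S.mulVec u := by
    intro u
    rw [hdotS]
    have := hdot_nonneg u
    positivity
  -- measurability of linear functionals
  have hmeas : ∀ u : Fin d → ℝ, Measurable fun ω => u ⬝ᵥ X ω := by
    intro u
    apply Finset.measurable_sum
    intro i _
    exact (measurable_const.mul ((measurable_pi_apply i).comp hXm))
  -- second moments
  have hmom : ∀ u : Fin d → ℝ, MemLp (fun ω => u ⬝ᵥ X ω) 2 P ∧
      ∫ ω, (u ⬝ᵥ X ω) ^ 2 ∂P = u ⬝ᵥ S.mulVec u := by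
    intro u
    have hmap := hlaw u
    have hmsq : Measurable fun x : ℝ => x ^ 2 := measurable_id.pow_const 2
    have hintP : Integrable (fun ω => (u ⬝ᵥ X ω) ^ 2) P := by
      have h1 : Integrable (fun x : ℝ => x ^ 2) (Measure.map (fun ω => u ⬝ᵥ X ω) P) := by
        rw [hmap]; exact (gaussian_sq _).1
      exact (integrable_map_measure hmsq.aestronglyMeasurable
        (hmeas u).aemeasurable).mp h1
    refine ⟨(memLp_two_iff_integrable_sq (hmeas u).aestronglyMeasurable).mpr hintP, ?_⟩
    have h2 : ∫ ω, (u ⬝ᵥ X ω) ^ 2 ∂P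
        = ∫ x, x ^ 2 ∂(Measure.map (fun ω => u ⬝ᵥ X ω) P) :=
      (integral_map (hmeas u).aemeasurable hmsq.aestronglyMeasurable).symm
    rw [h2, hmap, (gaussian_sq _).2, Real.coe_toNNReal _ (hS_nonneg u)]
  -- notation
  set A : Ω → ℝ := fun ω => (w - vstar) ⬝ᵥ X ω with hA
  set B : Ω → ℝ := fun ω => w ⬝ᵥ X ω with hB
  have hArw : ∀ ω, A ω = w ⬝ᵥ X ω - vstar ⬝ᵥ X ω := by
    intro ω; rw [hA]; exact sub_dotProduct _ _ _
  -- Lipschitz bound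
  have hlip : LipschitzWith M₁.toNNReal f := by
    refine lipschitzWith_of_nnnorm_deriv_le hf fun x => ?_
    rw [← NNReal.coe_le_coe, coe_nnnorm, Real.norm_eq_abs, Real.coe_toNNReal _ hM₁0]
    exact hM₁ x
  have hlipr : ∀ a b : ℝ, |f a - f b| ≤ M₁ * |a - b| := by
    intro a b
    have := hlip.dist_le_mul a b
    rwa [Real.dist_eq, Real.dist_eq, Real.coe_toNNReal _ hM₁0] at this
  -- pointwise bound
  have hpt : ∀ ω, |(f (w ⬝ᵥ X ω) - f (vstar ⬝ᵥ X ω)) * deriv f (w ⬝ᵥ X ω) * (w ⬝ᵥ X ω)|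
      ≤ M₁ ^ 2 * (|A ω| * |B ω|) := by
    intro ω
    rw [abs_mul, abs_mul]
    have h1 : |f (w ⬝ᵥ X ω) - f (vstar ⬝ᵥ X ω)| ≤ M₁ * |A ω| := by
      rw [hArw ω]; exact hlipr _ _
    calc |f (w ⬝ᵥ X ω) - f (vstar ⬝ᵥ X ω)| * |deriv f (w ⬝ᵥ X ω)| * |w ⬝ᵥ X ω|
        ≤ (M₁ * |A ω|) * M₁ * |B ω| := by
          refine mul_le_mul (mul_le_mul h1 (hM₁ _) (abs_nonneg _)
            (by positivity)) le_rfl (abs_nonneg _) (by positivity)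
      _ = M₁ ^ 2 * (|A ω| * |B ω|) := by ring
  -- integrability of the majorant
  have hABint : Integrable (fun ω => A ω * B ω) P := by
    have h := ((hmom w).1).smul (φ := A) ((hmom (w - vstar)).1)
      (p := 2) (q := 2) (r := 1)
    rw [memLp_one_iff_integrable] at h
    exact h.congr (Filter.Eventually.of_forall fun ω => by simp [smul_eq_mul, hB])
  have hmaj : Integrable (fun ω => M₁ ^ 2 * (|A ω| * |B ω|)) P := by
    refine (Integrable.const_mul ?_ _)
    exact (hABint.abs.congr (Filter.Eventually.of_forall fun ω => by simp [abs_mul]))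
  -- Hölder / Cauchy–Schwarz on L²
  have hconj : Real.HolderConjugate 2 2 := ⟨by norm_num, by norm_num, by norm_num⟩
  have h2e : (ENNReal.ofReal (2:ℝ)) = 2 := by norm_num
  have hA2 : MemLp A (ENNReal.ofReal (2:ℝ)) P := by rw [h2e]; exact (hmom (w - vstar)).1
  have hB2 : MemLp B (ENNReal.ofReal (2:ℝ)) P := by rw [h2e]; exact (hmom w).1
  have holder := integral_mul_norm_le_Lp_mul_Lq hconj hA2 hB2
  have hnormA : (∫ ω, ‖A ω‖ ^ (2:ℝ) ∂P) = ∫ ω, (A ω) ^ 2 ∂P := by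
    refine integral_congr_ae (Filter.Eventually.of_forall fun ω => ?_)
    simp only [Real.norm_eq_abs]
    rw [show ((2:ℝ)) = ((2:ℕ):ℝ) from by norm_num, Real.rpow_natCast, sq_abs]
  have hnormB : (∫ ω, ‖B ω‖ ^ (2:ℝ) ∂P) = ∫ ω, (B ω) ^ 2 ∂P := by
    refine integral_congr_ae (Filter.Eventually.of_forall fun ω => ?_)
    simp only [Real.norm_eq_abs]
    rw [show ((2:ℝ)) = ((2:ℕ):ℝ) from by norm_num, Real.rpow_natCast, sq_abs]
  rw [hnormA, hnormB, (hmom (w - vstar)).2, (hmom w).2] at holder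
  -- bounds on the variances
  have hvarA : (w - vstar) ⬝ᵥ S.mulVec (w - vstar) ≤ (1 + lam) * ((w - vstar) ⬝ᵥ (w - vstar)) := by
    rw [hdotS]
    have h := hCSfin v (w - vstar)
    rw [hv, one_mul] at h
    nlinarith [hdot_nonneg (w - vstar)]
  have hvarB : w ⬝ᵥ S.mulVec w ≤ 1 + lam := by
    rw [hdotS, hw]
    have h := hCSfin v w
    rw [hv, hw, one_mul] at h
    nlinarith [hlam]
  -- put everything together
  have habs : |∫ ω, (f (w ⬝ᵥ X ω) - f (vstar ⬝ᵥ X ω)) * deriv f (w ⬝ᵥ X ω) * (w ⬝ᵥ X ω) ∂P|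
      ≤ ∫ ω, M₁ ^ 2 * (|A ω| * |B ω|) ∂P := by
    have h0 := norm_integral_le_integral_norm (μ := P)
      (fun ω => (f (w ⬝ᵥ X ω) - f (vstar ⬝ᵥ X ω)) * deriv f (w ⬝ᵥ X ω) * (w ⬝ᵥ X ω))
    rw [Real.norm_eq_abs] at h0
    refine h0.trans (integral_mono_of_nonneg
      (Filter.Eventually.of_forall fun ω => norm_nonneg _) hmaj
      (Filter.Eventually.of_forall fun ω => ?_))
    simpa [Real.norm_eq_abs, abs_mul] using hpt ω
  have hmid : (∫ ω, M₁ ^ 2 * (|A ω| * |B ω|) ∂P)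
      = M₁ ^ 2 * ∫ ω, ‖A ω‖ * ‖B ω‖ ∂P := by
    simp only [Real.norm_eq_abs]
    rw [integral_const_mul]
  have hfinal : ((w - vstar) ⬝ᵥ S.mulVec (w - vstar)) ^ ((1:ℝ)/2)
      * (w ⬝ᵥ S.mulVec w) ^ ((1:ℝ)/2)
      ≤ (1 + lam) * Real.sqrt ((w - vstar) ⬝ᵥ (w - vstar)) := by
    rw [← Real.sqrt_eq_rpow, ← Real.sqrt_eq_rpow]
    have h1lam : (0:ℝ) ≤ 1 + lam := by linarith
    calc Real.sqrt ((w - vstar) ⬝ᵥ S.mulVec (w - vstar)) * Real.sqrt (w ⬝ᵥ S.mulVec w)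
        ≤ Real.sqrt ((1 + lam) * ((w - vstar) ⬝ᵥ (w - vstar))) * Real.sqrt (1 + lam) :=
          mul_le_mul (Real.sqrt_le_sqrt hvarA) (Real.sqrt_le_sqrt hvarB)
            (Real.sqrt_nonneg _) (Real.sqrt_nonneg _)
      _ = (1 + lam) * Real.sqrt ((w - vstar) ⬝ᵥ (w - vstar)) := by
          rw [Real.sqrt_mul h1lam, mul_right_comm, Real.mul_self_sqrt h1lam]
  calc |∫ ω, (f (w ⬝ᵥ X ω) - f (vstar ⬝ᵥ X ω)) * deriv f (w ⬝ᵥ X ω) * (w ⬝ᵥ X ω) ∂P|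
      ≤ M₁ ^ 2 * ∫ ω, ‖A ω‖ * ‖B ω‖ ∂P := by rw [← hmid]; exact habs
    _ ≤ M₁ ^ 2 * (((w - vstar) ⬝ᵥ S.mulVec (w - vstar)) ^ ((1:ℝ)/2)
        * (w ⬝ᵥ S.mulVec w) ^ ((1:ℝ)/2)) := by
          refine mul_le_mul_of_nonneg_left holder (by positivity)
    _ ≤ M₁ ^ 2 * ((1 + lam) * Real.sqrt ((w - vstar) ⬝ᵥ (w - vstar))) :=
          mul_le_mul_of_nonneg_left hfinal (by positivity)
    _ = M₁ ^ 2 * (1 + lam) * Real.sqrt ((w - vstar) ⬝ᵥ (w - vstar)) := by ring
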